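/- arXiv:2402.05674 — 2 statements merged into one kernel-verified Lean document; each statement's English description precedes it below -/
import Mathlib

section
/- Let g : ℝ → ℝ be a convex, non-increasing function, let Σ be a symmetric positive definite d×d real matrix, let θ, x ∈ ℝ^d with θ ≠ 0, y ∈ {-1,1}, and ε ≥ 0. Then the maximum of g(y⋅θᵀ(x+δ)) over all δ ∈ ℝ^d with δᵀΣ⁻¹δ ≤ ε² equals g(y⋅θᵀx − ε√(θᵀΣθ)). -/
open Matrix

lemma symm_dot_swap {d : ℕ} {S : Matrix (Fin d) (Fin d) ℝ} (hSsymm : S.IsSymm)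
    (u v : Fin d → ℝ) : u ⬝ᵥ (S *ᵥ v) = (S *ᵥ u) ⬝ᵥ v := by
  rw [dotProduct_mulVec, ← Matrix.mulVec_transpose, hSsymm.eq]

/-- For a convex non-increasing loss `g`, a symmetric positive
definite matrix `S`, `θ ≠ 0`, `y ∈ {-1,1}` and `ε ≥ 0`, the maximum of
`g (y * θᵀ(x+δ))` over the ellipsoid `{δ : δᵀ S⁻¹ δ ≤ ε²}` equals
`g (y * θᵀx - ε * √(θᵀ S θ))`. -/
theorem adversarial_inner_max
    {d : ℕ} (g : ℝ → ℝ) (hg_conv : ConvexOn ℝ Set.univ g) (hg_mono : Antitone g)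
    (S : Matrix (Fin d) (Fin d) ℝ) (hSsymm : S.IsSymm) (hSpd : S.PosDef)
    (θ x : Fin d → ℝ) (hθ : θ ≠ 0) (y : ℝ) (hy : y = 1 ∨ y = -1)
    (ε : ℝ) (hε : 0 ≤ ε) :
    IsGreatest {v : ℝ | ∃ δ : Fin d → ℝ, δ ⬝ᵥ (S⁻¹ *ᵥ δ) ≤ ε ^ 2 ∧
        v = g (y * (θ ⬝ᵥ (x + δ)))}
      (g (y * (θ ⬝ᵥ x) - ε * Real.sqrt (θ ⬝ᵥ (S *ᵥ θ)))) := by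
  have hy2 : y * y = 1 := by rcases hy with h | h <;> simp [h]
  set a : ℝ := θ ⬝ᵥ (S *ᵥ θ) with ha
  have hapos : 0 < a := by
    have := hSpd.re_dotProduct_pos hθ
    simpa [a] using this
  have hsa : 0 < Real.sqrt a := Real.sqrt_pos.mpr hapos
  have hsa2 : Real.sqrt a * Real.sqrt a = a := Real.mul_self_sqrt hapos.le
  have hdet : IsUnit S.det := hSpd.det_pos.ne'.isUnit
  have hinv : S⁻¹ * S = 1 := Matrix.nonsing_inv_mul S hdet
  have hSinv_symm : (S⁻¹).IsSymm := by
    rw [Matrix.IsSymm, Matrix.transpose_nonsing_inv, hSsymm.eq]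
  have hcancel : ∀ v : Fin d → ℝ, S⁻¹ *ᵥ (S *ᵥ v) = v := by
    intro v; rw [Matrix.mulVec_mulVec, hinv, Matrix.one_mulVec]
  have hkey : (S *ᵥ θ) ⬝ᵥ (S⁻¹ *ᵥ (S *ᵥ θ)) = a := by
    rw [hcancel]; rw [dotProduct_comm]
  -- Cauchy-Schwarz for the S⁻¹ inner product
  have hCS : ∀ δ : Fin d → ℝ, (θ ⬝ᵥ δ) ^ 2 ≤ a * (δ ⬝ᵥ (S⁻¹ *ᵥ δ)) := by
    intro δ
    set c := θ ⬝ᵥ δ with hc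
    set b := δ ⬝ᵥ (S⁻¹ *ᵥ δ) with hb
    set u := a • δ - c • (S *ᵥ θ) with hu
    have h0 : 0 ≤ u ⬝ᵥ (S⁻¹ *ᵥ u) := by
      simpa using hSpd.inv.posSemidef.re_dotProduct_nonneg u
    have h1 : δ ⬝ᵥ (S⁻¹ *ᵥ (S *ᵥ θ)) = c := by
      rw [hcancel]; exact dotProduct_comm δ θ
    have h2 : (S *ᵥ θ) ⬝ᵥ (S⁻¹ *ᵥ δ) = c := by
      rw [symm_dot_swap hSinv_symm, hcancel]
    have hexp : u ⬝ᵥ (S⁻¹ *ᵥ u) = a * a * b - 2 * a * c * c + c * c * a := by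
      simp only [hu, Matrix.mulVec_sub, Matrix.mulVec_smul, dotProduct_sub,
        sub_dotProduct, dotProduct_smul, smul_dotProduct, smul_eq_mul,
        h1, h2, hkey, ← hb]
      ring
    rw [hexp] at h0
    nlinarith [hapos, h0]
  constructor
  · -- membership: the optimal δ
    refine ⟨(-(y * ε) / Real.sqrt a) • (S *ᵥ θ), ?_, ?_⟩
    · have heq : ((-(y * ε) / Real.sqrt a) • (S *ᵥ θ)) ⬝ᵥ
          (S⁻¹ *ᵥ ((-(y * ε) / Real.sqrt a) • (S *ᵥ θ)))
          = (-(y * ε) / Real.sqrt a) * ((-(y * ε) / Real.sqrt a) * a) := by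
        simp only [Matrix.mulVec_smul, dotProduct_smul, smul_dotProduct,
          smul_eq_mul, hkey]
      rw [heq]
      have : (-(y * ε) / Real.sqrt a) * ((-(y * ε) / Real.sqrt a) * a)
          = y * y * ε ^ 2 := by
        rw [← hsa2]; field_simp; ring_nf; rw [Real.sqrt_sq hsa.le]
      rw [this, hy2, one_mul]
    · have hθδ : θ ⬝ᵥ ((-(y * ε) / Real.sqrt a) • (S *ᵥ θ)) =
          -(y * ε) * Real.sqrt a := by
        rw [dotProduct_smul, smul_eq_mul, ← ha]
        field_simp
        linear_combination (y * ε) * hsa2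
      rw [dotProduct_add, hθδ]
      congr 1
      linear_combination (ε * Real.sqrt a) * hy2
  · -- upper bound
    rintro v ⟨δ, hδ, rfl⟩
    apply hg_mono
    rw [dotProduct_add]
    have hc2 : (θ ⬝ᵥ δ) ^ 2 ≤ (ε * Real.sqrt a) ^ 2 := by
      have := hCS δ
      have h2 : a * (δ ⬝ᵥ (S⁻¹ *ᵥ δ)) ≤ a * ε ^ 2 := by
        exact mul_le_mul_of_nonneg_left hδ hapos.le
      nlinarith [hsa2]
    have hbound : -(ε * Real.sqrt a) ≤ y * (θ ⬝ᵥ δ) := by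
      have hyc2 : (y * (θ ⬝ᵥ δ)) ^ 2 ≤ (ε * Real.sqrt a) ^ 2 := by
        nlinarith [hy2, hc2]
      nlinarith [sq_nonneg (y * (θ ⬝ᵥ δ) + ε * Real.sqrt a),
        mul_nonneg hε hsa.le]
    nlinarith [hbound]
end

section
/- For b ∈ ℝ and a > 0, ∫₀^b e^{−x²} erfc(a x) dx = (1/(2√π a)) [ −4πa·T(√2 a b, 1/a) + πa·erf(b)·erfc(ab) + 2a·arctan(1/a) ], where T is Owen's T function. -/
open Real

/-- The error function `erf x = (2/√π) ∫₀ˣ e^{-t²} dt`. -/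
noncomputable def erf (x : ℝ) : ℝ :=
  (2 / Real.sqrt π) * ∫ t in (0:ℝ)..x, Real.exp (-t ^ 2)

/-- The complementary error function `erfc x = 1 - erf x`. -/
noncomputable def erfc (x : ℝ) : ℝ := 1 - erf x

/-- Owen's T function `T(h,a) = (1/(2π)) ∫₀^a exp(−h²(1+x²)/2)/(1+x²) dx`. -/
noncomputable def owenT (h a : ℝ) : ℝ :=
  (1 / (2 * π)) * ∫ x in (0:ℝ)..a, Real.exp (-h ^ 2 * (1 + x ^ 2) / 2) / (1 + x ^ 2)


lemma erf_zero : erf 0 = 0 := by simp [erf]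

lemma hasDerivAt_erf (x : ℝ) :
    HasDerivAt erf (2 / Real.sqrt π * Real.exp (-x ^ 2)) x := by
  have hc : Continuous fun t : ℝ => Real.exp (-t ^ 2) := by continuity
  have h := (hc.integral_hasStrictDerivAt 0 x).hasDerivAt
  exact h.const_mul (2 / Real.sqrt π)

lemma continuous_erf : Continuous erf := by
  exact Differentiable.continuous (fun x => (hasDerivAt_erf x).differentiableAt)

lemma integral_exp_neg_sq (y : ℝ) :
    ∫ t in (0:ℝ)..y, Real.exp (-t ^ 2) = Real.sqrt π / 2 * erf y := by
  have h : Real.sqrt π ≠ 0 := by positivity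
  rw [erf]; field_simp

lemma hasDerivAt_owenT (a0 h0 : ℝ) :
    HasDerivAt (fun h => owenT h a0)
      (-(Real.sqrt 2 / (4 * Real.sqrt π)) * Real.exp (-h0 ^ 2 / 2)
        * erf (h0 * a0 / Real.sqrt 2)) h0 := by
  have hpos : ∀ x : ℝ, (0:ℝ) < 1 + x ^ 2 := fun x => by positivity
  have hFc : ∀ h : ℝ, Continuous
      (fun t : ℝ => Real.exp (-h ^ 2 * (1 + t ^ 2) / 2) / (1 + t ^ 2)) := fun h =>
    Continuous.div (by continuity) (by continuity) (fun t => (hpos t).ne')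
  have hF'c : Continuous (fun t : ℝ => -h0 * Real.exp (-h0 ^ 2 * (1 + t ^ 2) / 2)) := by
    continuity
  have key := intervalIntegral.hasDerivAt_integral_of_dominated_loc_of_deriv_le
    (F := fun h t => Real.exp (-h ^ 2 * (1 + t ^ 2) / 2) / (1 + t ^ 2))
    (F' := fun h t => -h * Real.exp (-h ^ 2 * (1 + t ^ 2) / 2))
    (a := 0) (b := a0) (x₀ := h0) (bound := fun _ => |h0| + 1) (μ := MeasureTheory.volume)
    (Metric.ball_mem_nhds h0 one_pos)
    (Filter.Eventually.of_forall fun h => ((hFc h).aestronglyMeasurable).restrict)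
    ((hFc h0).intervalIntegrable 0 a0)
    (hF'c.aestronglyMeasurable.restrict)
    (Filter.Eventually.of_forall fun t _ => by
      intro x hx
      have h1 : Real.exp (-x ^ 2 * (1 + t ^ 2) / 2) ≤ 1 :=
        Real.exp_le_one_iff.2 (by nlinarith [sq_nonneg x, sq_nonneg t])
      have h2 : |x| ≤ |h0| + 1 := by
        have := mem_ball_iff_norm.1 hx
        have : |x - h0| < 1 := by simpa using this
        calc |x| = |h0 + (x - h0)| := by ring_nf
        _ ≤ |h0| + |x - h0| := abs_add_le _ _
        _ ≤ |h0| + 1 := by linarith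
      calc ‖-x * Real.exp (-x ^ 2 * (1 + t ^ 2) / 2)‖
          = |x| * Real.exp (-x ^ 2 * (1 + t ^ 2) / 2) := by
            rw [norm_mul]; simp [abs_of_nonneg (Real.exp_nonneg _)]
        _ ≤ (|h0| + 1) * 1 := by
            apply mul_le_mul h2 h1 (Real.exp_nonneg _) (by positivity)
        _ = |h0| + 1 := mul_one _)
    intervalIntegrable_const
    (Filter.Eventually.of_forall fun t _ => by
      intro x hx
      have h1 : HasDerivAt (fun h : ℝ => -h ^ 2 * (1 + t ^ 2) / 2)
          (-(2 * x ^ 1) * (1 + t ^ 2) / 2) x :=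
        (((hasDerivAt_pow 2 x).neg).mul_const ((1 + t ^ 2))).div_const 2
      have h2 := h1.exp
      have h3 := h2.div_const (1 + t ^ 2)
      refine h3.congr_deriv (Eq.symm ?_)
      field_simp)
  have final := key.2.const_mul (1 / (2 * π))
  have heq : (fun h : ℝ => (1 / (2 * π)) *
      ∫ t in (0:ℝ)..a0, Real.exp (-h ^ 2 * (1 + t ^ 2) / 2) / (1 + t ^ 2))
      = fun h => owenT h a0 := rfl
  rw [heq] at final
  refine final.congr_deriv (Eq.symm ?_)
  rcases eq_or_ne h0 0 with h0eq | h0ne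
  · simp [h0eq, erf_zero]
  · have hs2 : Real.sqrt 2 ≠ 0 := by positivity
    have hsπ : Real.sqrt π ≠ 0 := by positivity
    have hπ : Real.sqrt π * Real.sqrt π = π := Real.mul_self_sqrt pi_pos.le
    have h2 : Real.sqrt 2 * Real.sqrt 2 = 2 := Real.mul_self_sqrt (by norm_num)
    have step1 : ∀ t : ℝ, -h0 * Real.exp (-h0 ^ 2 * (1 + t ^ 2) / 2)
        = (-h0 * Real.exp (-h0 ^ 2 / 2)) * Real.exp (-(h0 / Real.sqrt 2 * t) ^ 2) := by
      intro t
      rw [mul_assoc, ← Real.exp_add]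
      congr 2
      field_simp
      linear_combination (-t ^ 2) * h2
    rw [intervalIntegral.integral_congr (g := fun t =>
        (-h0 * Real.exp (-h0 ^ 2 / 2)) * Real.exp (-(h0 / Real.sqrt 2 * t) ^ 2))
        (fun t _ => step1 t)]
    rw [intervalIntegral.integral_const_mul]
    rw [intervalIntegral.integral_comp_mul_left (fun u => Real.exp (-u ^ 2))
        (c := h0 / Real.sqrt 2) (div_ne_zero h0ne hs2)]
    rw [mul_zero, smul_eq_mul, integral_exp_neg_sq]
    rw [show h0 / Real.sqrt 2 * a0 = h0 * a0 / Real.sqrt 2 by ring]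
    have hπ2 : Real.sqrt π ^ 2 = π := Real.sq_sqrt pi_pos.le
    field_simp
    linear_combination (4 * erf (h0 * a0 / Real.sqrt 2)) * hπ2

lemma hasDerivAt_owenT_comp (a : ℝ) (hane : a ≠ 0) (b : ℝ) :
    HasDerivAt (fun b => owenT (Real.sqrt 2 * a * b) (1 / a))
      (-(a / (2 * Real.sqrt π)) * Real.exp (-(a * b) ^ 2) * erf b) b := by
  have hinner : HasDerivAt (fun b : ℝ => Real.sqrt 2 * a * b) (Real.sqrt 2 * a) b := by
    simpa using (hasDerivAt_id b).const_mul (Real.sqrt 2 * a)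
  have h := (hasDerivAt_owenT (1 / a) (Real.sqrt 2 * a * b)).comp b hinner
  refine h.congr_deriv (Eq.symm ?_)
  have h2 : Real.sqrt 2 ^ 2 = 2 := Real.sq_sqrt (by norm_num)
  have hs2 : Real.sqrt 2 ≠ 0 := by positivity
  have hsπ : Real.sqrt π ≠ 0 := by positivity
  have e1 : -(Real.sqrt 2 * a * b) ^ 2 / 2 = -(a * b) ^ 2 := by
    linear_combination (-(a ^ 2 * b ^ 2) / 2) * h2
  have e2 : Real.sqrt 2 * a * b * (1 / a) / Real.sqrt 2 = b := by
    field_simp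
  rw [e1, e2]
  field_simp
  linear_combination (2 * erf b) * h2

/-- for `b ∈ ℝ` and `a > 0`,
`∫₀^b e^{−x²} erfc(ax) dx = (1/(2√π a)) [−4πa T(√2 a b, 1/a)
  + πa erf(b) erfc(ab) + 2a arctan(1/a)]`. -/
theorem integral_exp_mul_erfc (a b : ℝ) (ha : 0 < a) :
    ∫ x in (0:ℝ)..b, Real.exp (-x ^ 2) * erfc (a * x)
      = (1 / (2 * Real.sqrt π * a)) *
        (-(4 * π * a) * owenT (Real.sqrt 2 * a * b) (1 / a)
          + π * a * erf b * erfc (a * b)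
          + 2 * a * Real.arctan (1 / a)) := by
  have hane : a ≠ 0 := ha.ne'
  have hsπ : Real.sqrt π ≠ 0 := by positivity
  have hπ2 : Real.sqrt π ^ 2 = π := Real.sq_sqrt pi_pos.le
  have hπ : π ≠ 0 := pi_ne_zero
  have hcont : Continuous fun x : ℝ => Real.exp (-x ^ 2) * erfc (a * x) := by
    apply Continuous.mul (by continuity)
    have h : Continuous fun x : ℝ => 1 - erf (a * x) :=
      continuous_const.sub (continuous_erf.comp (by continuity))
    simpa [erfc] using h
  have hF : ∀ x : ℝ, HasDerivAt (fun y => ∫ t in (0:ℝ)..y, Real.exp (-t ^ 2) * erfc (a * t))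
      (Real.exp (-x ^ 2) * erfc (a * x)) x := fun x =>
    (hcont.integral_hasStrictDerivAt 0 x).hasDerivAt
  have hG : ∀ x : ℝ, HasDerivAt (fun y => (1 / (2 * Real.sqrt π * a)) *
        (-(4 * π * a) * owenT (Real.sqrt 2 * a * y) (1 / a)
          + π * a * erf y * erfc (a * y)
          + 2 * a * Real.arctan (1 / a)))
      (Real.exp (-x ^ 2) * erfc (a * x)) x := by
    intro x
    have hO := hasDerivAt_owenT_comp a hane x
    have h1 := hasDerivAt_erf x
    have hax : HasDerivAt (fun y : ℝ => a * y) a x := by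
      simpa using (hasDerivAt_id x).const_mul a
    have h2 : HasDerivAt (fun y : ℝ => erfc (a * y))
        (-(2 / Real.sqrt π * Real.exp (-(a * x) ^ 2) * a)) x := by
      have h := ((hasDerivAt_erf (a * x)).comp x hax).const_sub 1
      simpa [erfc, Function.comp_def, mul_comm, mul_assoc] using h
    have h3 := (h1.const_mul (π * a)).mul h2
    have h4 := ((hO.const_mul (-(4 * π * a))).add h3).add_const (2 * a * Real.arctan (1 / a))
    have h5 := h4.const_mul (1 / (2 * Real.sqrt π * a))
    refine h5.congr_deriv (Eq.symm ?_)
    rw [erfc]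
    field_simp
    linear_combination (-4 * Real.exp (-x ^ 2) * erf (x * a) + 4 * Real.exp (-x ^ 2)) * hπ2
  have key : ∀ x : ℝ, HasDerivAt (fun y : ℝ =>
      (∫ t in (0:ℝ)..y, Real.exp (-t ^ 2) * erfc (a * t))
        - (1 / (2 * Real.sqrt π * a)) *
        (-(4 * π * a) * owenT (Real.sqrt 2 * a * y) (1 / a)
          + π * a * erf y * erfc (a * y)
          + 2 * a * Real.arctan (1 / a))) 0 x := fun x => by
    exact ((hF x).sub (hG x)).congr_deriv (sub_self _)
  have hconst := is_const_of_deriv_eq_zero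
    (fun x => (key x).differentiableAt) (fun x => (key x).deriv) b 0
  have hO0 : owenT (Real.sqrt 2 * a * 0) (1 / a) = 1 / (2 * π) * Real.arctan (1 / a) := by
    simp [owenT]
  have hF0 : (∫ t in (0:ℝ)..(0:ℝ), Real.exp (-t ^ 2) * erfc (a * t)) = 0 :=
    intervalIntegral.integral_same
  rw [hF0, hO0, erf_zero] at hconst
  have : (1 / (2 * Real.sqrt π * a)) *
        (-(4 * π * a) * (1 / (2 * π) * Real.arctan (1 / a))
          + π * a * 0 * erfc (a * 0)
          + 2 * a * Real.arctan (1 / a)) = 0 := by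
    field_simp
    ring
  rw [this, sub_zero, sub_eq_zero] at hconst
  exact hconst
end
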